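/- For any nonempty S ⊆ V ∖ {s} and any tour T of the TDTSP, the number of arcs of T whose time-expanded embedding lies in A^T(S) (both endpoints projecting into S) is at most |S| − 1. -/

import Mathlib

/-- Arrival time after traversing the vertices of `rest` starting from `u` at time `θ`. -/
def arrival {n : ℕ} (c : Fin n → Fin n → ℕ → ℕ) : Fin n → ℕ → List (Fin n) → ℕ
  | _, θ, [] => θ
  | u, θ, v :: rest => arrival c v (θ + c u v θ) rest

/-- A TDTSP tour: a Hamiltonian ordering of the vertices starting at the source `0`. -/
def IsTour (n : ℕ) [NeZero n] (L : List (Fin n)) : Prop :=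
  L.Nodup ∧ L.length = n ∧ L.head? = some 0

/-- The arrival time of a tour back at the source, departing at time 0. -/
def tourArrival {n : ℕ} [NeZero n] (c : Fin n → Fin n → ℕ → ℕ) (L : List (Fin n)) : ℕ :=
  arrival c 0 0 (L.tail ++ [0])

/-- The time-dependent triangle inequality. -/
def TriIneq {n : ℕ} (c : Fin n → Fin n → ℕ → ℕ) (θmax : ℕ) : Prop :=
  ∀ u v w θ, θ + c u v θ ≤ θmax → c u w θ ≤ c u v θ + c v w (θ + c u v θ)

/-- The cyclically consecutive pairs (the arcs) of a cyclic vertex list. -/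
def cyclePairs {α : Type*} (L : List α) : List (α × α) := L.zip (L.tail ++ L.take 1)

/-- A Hamiltonian cycle of an undirected graph, as a cyclic vertex list. -/
def IsHamCycle {n : ℕ} (G : SimpleGraph (Fin n)) (L : List (Fin n)) : Prop :=
  L.Nodup ∧ L.length = n ∧ ∀ p ∈ cyclePairs L, G.Adj p.1 p.2

/-- The static (time-independent) cost of a cyclic vertex list. -/
def staticTourCost {n : ℕ} (c : Fin n → Fin n → ℕ) (L : List (Fin n)) : ℕ :=
  ((cyclePairs L).map fun p => c p.1 p.2).sum

/-- Static costs: 1 on edges of `G`, 2 otherwise. -/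
def cst {n : ℕ} (G : SimpleGraph (Fin n)) [DecidableRel G.Adj] (u v : Fin n) : ℕ :=
  if G.Adj u v then 1 else 2

/-- The time-expanded arcs traversed starting from `u` at time `θ` along a vertex list. -/
def arcsT {n : ℕ} (c : Fin n → Fin n → ℕ → ℕ) :
    Fin n → ℕ → List (Fin n) → List (Fin n × Fin n × ℕ)
  | _, _, [] => []
  | u, θ, v :: rest => (u, v, θ) :: arcsT c v (θ + c u v θ) rest

/-- The time-expanded arcs of a tour (departing the source `0` at time 0). -/
def tourArcsT {n : ℕ} [NeZero n] (c : Fin n → Fin n → ℕ → ℕ) (L : List (Fin n)) :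
    List (Fin n × Fin n × ℕ) :=
  arcsT c 0 0 (L.tail ++ [0])

lemma arcsT_count_le {n : ℕ} (c : Fin n → Fin n → ℕ → ℕ) (S : Finset (Fin n)) :
    ∀ (M : List (Fin n)) (u : Fin n) (θ : ℕ),
      (arcsT c u θ M).countP (fun a => decide (a.1 ∈ S ∧ a.2.1 ∈ S)) ≤
        M.countP (fun x => decide (x ∈ S))
  | [], _, _ => by simp [arcsT]
  | v :: rest, u, θ => by
      have := arcsT_count_le c S rest v (θ + c u v θ)
      simp only [arcsT, List.countP_cons]
      by_cases hv : v ∈ S <;> by_cases hu : u ∈ S <;> simp [hv, hu, Bool.decide_and] at this ⊢ <;> omega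

lemma arcsT_count_lt {n : ℕ} (c : Fin n → Fin n → ℕ → ℕ) (S : Finset (Fin n)) :
    ∀ (M : List (Fin n)) (u : Fin n) (θ : ℕ), u ∉ S → (∃ x ∈ M, x ∈ S) →
      (arcsT c u θ M).countP (fun a => decide (a.1 ∈ S ∧ a.2.1 ∈ S)) + 1 ≤
        M.countP (fun x => decide (x ∈ S))
  | [], _, _ => by simp
  | v :: rest, u, θ => by
      intro hu hex
      simp only [arcsT, List.countP_cons]
      by_cases hv : v ∈ S
      · have := arcsT_count_le c S rest v (θ + c u v θ)
        simp [hv, hu, Bool.decide_and] at this ⊢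
        omega
      · have hex' : ∃ x ∈ rest, x ∈ S := by
          obtain ⟨x, hxm, hxS⟩ := hex
          rcases List.mem_cons.1 hxm with rfl | h
          · exact absurd hxS hv
          · exact ⟨x, h, hxS⟩
        have := arcsT_count_lt c S rest v (θ + c u v θ) hv hex'
        simp [hv, hu, Bool.decide_and] at this ⊢
        omega

lemma countP_mem_le_card {n : ℕ} (S : Finset (Fin n)) (M : List (Fin n)) (h : M.Nodup) :
    M.countP (fun x => decide (x ∈ S)) ≤ S.card := by
  rw [List.countP_eq_length_filter]
  have hf : (M.filter (fun x => decide (x ∈ S))).Nodup := h.filter _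
  calc (M.filter (fun x => decide (x ∈ S))).length
      = (M.filter (fun x => decide (x ∈ S))).toFinset.card :=
        (List.toFinset_card_of_nodup hf).symm
    _ ≤ S.card := Finset.card_le_card (by intro x hx; simp at hx; exact hx.2)

/-- For any nonempty `S ⊆ V ∖ {s}`, any tour uses at most `|S| − 1`
time-expanded arcs with both endpoints projecting into `S` (subtour elimination). -/
theorem induced_arcs_bound (n θmax : ℕ) [NeZero n] (c : Fin n → Fin n → ℕ → ℕ)
    (S : Finset (Fin n)) (hS0 : (0 : Fin n) ∉ S) (hne : S.Nonempty)
    (L : List (Fin n)) (hL : IsTour n L) (hfeas : tourArrival c L ≤ θmax) :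
    (tourArcsT c L).countP (fun a => decide (a.1 ∈ S ∧ a.2.1 ∈ S)) ≤ S.card - 1 := by
  obtain ⟨hnd, hlen, hhead⟩ := hL
  obtain ⟨s, hs⟩ := hne
  match L, hhead with
  | a :: t, hhead =>
    have ha : a = 0 := by simpa using hhead
    subst ha
    have h0t : (0 : Fin n) ∉ t := (List.nodup_cons.1 hnd).1
    have hndt : t.Nodup := (List.nodup_cons.1 hnd).2
    -- every vertex appears in L
    have huniv : (0 :: t : List (Fin n)).toFinset = Finset.univ := by
      apply Finset.eq_univ_of_card
      rw [List.toFinset_card_of_nodup hnd, hlen, Fintype.card_fin]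
    have hsL : s ∈ (0 :: t : List (Fin n)) := by
      rw [← List.mem_toFinset, huniv]; exact Finset.mem_univ s
    have hst : s ∈ t := by
      rcases List.mem_cons.1 hsL with rfl | h
      · exact absurd hs hS0
      · exact h
    have hM : t ++ [0] |>.Nodup := by
      simp [List.nodup_append, hndt]
      intro a ha h; subst h; exact h0t ha
    have key := arcsT_count_lt c S (t ++ [0]) 0 0 hS0
      ⟨s, List.mem_append_left _ hst, hs⟩
    have hcard := countP_mem_le_card S (t ++ [0]) hM
    have hpos : 1 ≤ S.card := Finset.card_pos.2 ⟨s, hs⟩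
    have : (tourArcsT c (0 :: t)).countP (fun a => decide (a.1 ∈ S ∧ a.2.1 ∈ S)) + 1 ≤
        S.card := by
      simpa [tourArcsT] using le_trans key hcard
    omega
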